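/- (Triangle inequality invariance, case N_b ≤ N_a ≤ N_c) Let R^k take values in [0,1] with d^k(x,y) = 1 − R^k(x,y) satisfying the triangle inequality d^k(x,z) ≤ d^k(x,y) + d^k(y,z) for all vertices. Suppose N_b ≤ N_a ≤ N_c, let 𝓜(a,b) and 𝓜(b,c) be maximum-weight matchings of cardinalities N_b each (weights in [β,1], β > 0), and let M = {(x,z) : (x,y) ∈ 𝓜(a,b), (y,z) ∈ 𝓜(b,c)} be their composition. Then d^{k+1}(a,b) + d^{k+1}(b,c) ≥ 1 − (1−β)·w(M)/N_c − β, where d^{k+1}(u,v) = 1 − (1−β)·w(𝓜(u,v))/max(N_u,N_v) − β. Consequently d^{k+1}(a,c) ≤ d^{k+1}(a,b) + d^{k+1}(b,c). -/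

import Mathlib

def IsMatching {α β : Type*} (A : Finset α) (B : Finset β) (M : Finset (α × β)) : Prop :=
  (∀ p ∈ M, p.1 ∈ A ∧ p.2 ∈ B) ∧
  (∀ p ∈ M, ∀ q ∈ M, p.1 = q.1 → p = q) ∧
  (∀ p ∈ M, ∀ q ∈ M, p.2 = q.2 → p = q)

def matchWeight {α β : Type*} (r : α → β → ℝ) (M : Finset (α × β)) : ℝ :=
  ∑ p ∈ M, r p.1 p.2

/-- Triangle inequality invariance, in the case `N_b ≤ N_a ≤ N_c`. `A`, `B`, `C` are
the neighborhoods of vertices `a`, `b`, `c` respectively. -/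
theorem stmt_17 {α : Type*} (A B C : Finset α)
    (hA : A.Nonempty) (hB : B.Nonempty) (hC : C.Nonempty)
    (hBA : B.card ≤ A.card) (hAC : A.card ≤ C.card)
    (β : ℝ) (hβ : 0 < β) (hβ1 : β < 1)
    (Rk : α → α → ℝ)
    (hRk : ∀ x y, β ≤ Rk x y ∧ Rk x y ≤ 1)
    (htri : ∀ x y z, 1 - Rk x z ≤ (1 - Rk x y) + (1 - Rk y z))
    (Mab Mbc : Finset (α × α))
    (hMab : IsMatching A B Mab) (hMbc : IsMatching B C Mbc)
    (hMabMax : ∀ M', IsMatching A B M' → matchWeight Rk M' ≤ matchWeight Rk Mab)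
    (hMbcMax : ∀ M', IsMatching B C M' → matchWeight Rk M' ≤ matchWeight Rk Mbc)
    (hMabCard : Mab.card = B.card) (hMbcCard : Mbc.card = B.card)
    (M : Finset (α × α))
    (hM : ∀ p : α × α, p ∈ M ↔ ∃ y, (p.1, y) ∈ Mab ∧ (y, p.2) ∈ Mbc)
    (wAC : ℝ)
    (hwAC : IsGreatest {x | ∃ M', IsMatching A C M' ∧ x = matchWeight Rk M'} wAC)
    (dab dbc dac : ℝ)
    (hdab : dab = 1 - ((1 - β) * matchWeight Rk Mab / (max A.card B.card : ℕ) + β))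
    (hdbc : dbc = 1 - ((1 - β) * matchWeight Rk Mbc / (max B.card C.card : ℕ) + β))
    (hdac : dac = 1 - ((1 - β) * wAC / (max A.card C.card : ℕ) + β)) :
    dab + dbc ≥ 1 - (1 - β) * matchWeight Rk M / (C.card : ℝ) - β ∧
      dac ≤ dab + dbc := by
  classical
  obtain ⟨hab1, hab2, hab3⟩ := hMab
  obtain ⟨hbc1, hbc2, hbc3⟩ := hMbc
  -- images of the matchings cover B
  have himg_ab : Mab.image Prod.snd = B := by
    apply Finset.eq_of_subset_of_card_le
    · intro y hy
      obtain ⟨p, hp, rfl⟩ := Finset.mem_image.mp hy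
      exact (hab1 p hp).2
    · rw [Finset.card_image_of_injOn (fun p hp q hq h => hab3 p hp q hq h), hMabCard]
  have himg_bc : Mbc.image Prod.fst = B := by
    apply Finset.eq_of_subset_of_card_le
    · intro y hy
      obtain ⟨p, hp, rfl⟩ := Finset.mem_image.mp hy
      exact (hbc1 p hp).1
    · rw [Finset.card_image_of_injOn (fun p hp q hq h => hbc2 p hp q hq h), hMbcCard]
  set φ : α → α := fun y => if h : ∃ z, (y, z) ∈ Mbc then Classical.choose h else y with hφdef
  have hφ : ∀ y ∈ B, (y, φ y) ∈ Mbc := by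
    intro y hy
    rw [← himg_bc] at hy
    obtain ⟨q, hq, hq1⟩ := Finset.mem_image.mp hy
    have hex : ∃ z, (y, z) ∈ Mbc := ⟨q.2, by rwa [← hq1, Prod.mk.eta]⟩
    simp only [hφdef, dif_pos hex]
    exact Classical.choose_spec hex
  have hφuniq : ∀ y z, (y, z) ∈ Mbc → z = φ y := by
    intro y z hz
    have hy : y ∈ B := (hbc1 _ hz).1
    have := hbc2 (y, z) hz (y, φ y) (hφ y hy) rfl
    exact congrArg Prod.snd this
  have hMeq : M = Mab.image (fun p => (p.1, φ p.2)) := by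
    ext p
    rw [hM, Finset.mem_image]
    constructor
    · rintro ⟨y, h1, h2⟩
      refine ⟨(p.1, y), h1, ?_⟩
      have : p.2 = φ y := hφuniq y p.2 h2
      simp [← this]
    · rintro ⟨q, hq, rfl⟩
      exact ⟨q.2, by simpa using hq, hφ q.2 (hab1 q hq).2⟩
  have hinjF : Set.InjOn (fun p : α × α => (p.1, φ p.2)) Mab := by
    intro p hp q hq h
    exact hab2 p hp q hq ((Prod.ext_iff.mp h).1)
  -- M is a matching between A and C
  have hMmatch : IsMatching A C M := by
    refine ⟨?_, ?_, ?_⟩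
    · intro p hp
      obtain ⟨y, h1, h2⟩ := (hM p).mp hp
      exact ⟨(hab1 _ h1).1, (hbc1 _ h2).2⟩
    · intro p hp q hq h
      obtain ⟨y1, h1, h2⟩ := (hM p).mp hp
      obtain ⟨y2, h3, h4⟩ := (hM q).mp hq
      have h3' : (p.1, y2) ∈ Mab := by rw [h]; exact h3
      have hy : y1 = y2 := (Prod.ext_iff.mp (hab2 (p.1, y1) h1 (p.1, y2) h3' rfl)).2
      subst hy
      have := hbc2 (y1, p.2) h2 (y1, q.2) h4 rfl
      exact Prod.ext_iff.mpr ⟨h, (Prod.ext_iff.mp this).2⟩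
    · intro p hp q hq h
      obtain ⟨y1, h1, h2⟩ := (hM p).mp hp
      obtain ⟨y2, h3, h4⟩ := (hM q).mp hq
      have h4' : (y2, p.2) ∈ Mbc := by rw [h]; exact h4
      have hy : y1 = y2 := (Prod.ext_iff.mp (hbc3 (y1, p.2) h2 (y2, p.2) h4' rfl)).1
      subst hy
      have := hab3 (p.1, y1) h1 (q.1, y1) h3 rfl
      exact Prod.ext_iff.mpr ⟨(Prod.ext_iff.mp this).1, h⟩
  -- weight computations
  have hsum_bc : matchWeight Rk Mbc = ∑ y ∈ B, Rk y (φ y) := by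
    rw [← himg_bc, Finset.sum_image (fun p hp q hq h => hbc2 p hp q hq h)]
    unfold matchWeight
    refine Finset.sum_congr rfl fun q hq => ?_
    rw [hφuniq q.1 q.2 (by rwa [Prod.mk.eta])]
  have hsum_ab2 : ∑ p ∈ Mab, Rk p.2 (φ p.2) = ∑ y ∈ B, Rk y (φ y) := by
    rw [← himg_ab, Finset.sum_image (fun p hp q hq h => hab3 p hp q hq h)]
  have hwM : matchWeight Rk M = ∑ p ∈ Mab, Rk p.1 (φ p.2) := by
    rw [hMeq]
    unfold matchWeight
    rw [Finset.sum_image hinjF]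
  have hkey : matchWeight Rk Mab + matchWeight Rk Mbc - (B.card : ℝ) ≤ matchWeight Rk M := by
    have h1 : ∀ p ∈ Mab, Rk p.1 p.2 + Rk p.2 (φ p.2) - 1 ≤ Rk p.1 (φ p.2) := by
      intro p hp
      have := htri p.1 p.2 (φ p.2)
      linarith
    have h2 : ∑ p ∈ Mab, (Rk p.1 p.2 + Rk p.2 (φ p.2) - 1) ≤ ∑ p ∈ Mab, Rk p.1 (φ p.2) :=
      Finset.sum_le_sum h1
    have h3 : ∑ p ∈ Mab, (Rk p.1 p.2 + Rk p.2 (φ p.2) - 1)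
        = matchWeight Rk Mab + (∑ p ∈ Mab, Rk p.2 (φ p.2)) - (Mab.card : ℝ) := by
      rw [Finset.sum_sub_distrib, Finset.sum_add_distrib, Finset.sum_const, nsmul_eq_mul,
        mul_one]
      rfl
    rw [hwM]
    rw [h3, hsum_ab2, ← hsum_bc, hMabCard] at h2
    linarith
  have hwab_le : matchWeight Rk Mab ≤ (B.card : ℝ) := by
    have : matchWeight Rk Mab ≤ ∑ _p ∈ Mab, (1 : ℝ) :=
      Finset.sum_le_sum fun p _ => (hRk p.1 p.2).2
    rw [Finset.sum_const, nsmul_eq_mul, mul_one, hMabCard] at this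
    exact this
  -- arithmetic
  have ha : (0 : ℝ) < (A.card : ℝ) := by exact_mod_cast Finset.card_pos.mpr hA
  have hc : (0 : ℝ) < (C.card : ℝ) := by exact_mod_cast Finset.card_pos.mpr hC
  have hba : (B.card : ℝ) ≤ (A.card : ℝ) := by exact_mod_cast hBA
  have hac : (A.card : ℝ) ≤ (C.card : ℝ) := by exact_mod_cast hAC
  set wab := matchWeight Rk Mab
  set wbc := matchWeight Rk Mbc
  set wM := matchWeight Rk M
  have hmax1 : max A.card B.card = A.card := max_eq_left hBA
  have hmax2 : max B.card C.card = C.card := max_eq_right (hBA.trans hAC)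
  have hmax3 : max A.card C.card = C.card := max_eq_right hAC
  rw [hmax1] at hdab
  rw [hmax2] at hdbc
  rw [hmax3] at hdac
  have key : wab / (A.card : ℝ) + wbc / (C.card : ℝ) - wM / (C.card : ℝ) ≤ 1 := by
    have h1 : wbc - wM ≤ (B.card : ℝ) - wab := by linarith
    have h2 : (wbc - wM) / (C.card : ℝ) ≤ ((B.card : ℝ) - wab) / (A.card : ℝ) := by
      rw [div_le_div_iff₀ hc ha]
      nlinarith [mul_le_mul_of_nonneg_right h1 ha.le,
        mul_le_mul_of_nonneg_left hac (by linarith : (0:ℝ) ≤ (B.card : ℝ) - wab)]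
    have h3 : wab / (A.card : ℝ) + ((B.card : ℝ) - wab) / (A.card : ℝ) = (B.card : ℝ) / (A.card : ℝ) := by
      rw [← add_div]; ring_nf
    have h4 : (B.card : ℝ) / (A.card : ℝ) ≤ 1 := (div_le_one ha).mpr hba
    have h5 : wbc / (C.card : ℝ) - wM / (C.card : ℝ) = (wbc - wM) / (C.card : ℝ) := by
      rw [sub_div]
    linarith
  have part1 : dab + dbc ≥ 1 - (1 - β) * wM / (C.card : ℝ) - β := by
    rw [hdab, hdbc]
    rw [mul_div_assoc, mul_div_assoc, mul_div_assoc]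
    nlinarith [mul_le_mul_of_nonneg_left key (by linarith : (0:ℝ) ≤ 1 - β)]
  refine ⟨part1, ?_⟩
  have hwMle : wM ≤ wAC := hwAC.2 ⟨M, hMmatch, rfl⟩
  have : dac ≤ 1 - (1 - β) * wM / (C.card : ℝ) - β := by
    rw [hdac]
    have : (1 - β) * wM / (C.card : ℝ) ≤ (1 - β) * wAC / (C.card : ℝ) :=
      (div_le_div_iff_of_pos_right hc).mpr (mul_le_mul_of_nonneg_left hwMle (by linarith))
    linarith
  linarith
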